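/- Let R be a finite commutative chain ring with maximal ideal γR of nilpotency index e > 1, let n > 1, and let λ ∈ γR \ γ²R. Then S = R[x]/⟨x^n − λ⟩ is a finite chain ring with maximal ideal ⟨x⟩, the nilpotency index of x in S is ne, and the ideals of S are exactly ⟨x^i⟩ for 0 ≤ i ≤ ne, with |⟨x^i⟩| = q^{ne − i} where q is the residue field size of R. -/

import Mathlib

open Polynomial

section Abstract

variable {S : Type*} [CommRing S]

private lemma chainAux_unit {x u t : S} {N : ℕ} (hN : x ^ N = 0) (hu : IsUnit u) :
    IsUnit (u + x * t) := by
  have hnil : IsNilpotent (x * t) := (Commute.all x t).isNilpotent_mul_right ⟨N, hN⟩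
  exact hnil.isUnit_add_left_of_commute hu (Commute.all _ _)

private lemma chainAux_struct {x : S} {N : ℕ} (hN : x ^ N = 0)
    (hloc : ∀ s : S, s ∉ Ideal.span {x} → IsUnit s)
    {s : S} (hs : s ≠ 0) :
    ∃ k < N, ∃ u : S, IsUnit u ∧ s = u * x ^ k := by
  classical
  have hPN : s ∉ Ideal.span {x ^ N} := by
    rw [hN]
    simpa [Ideal.mem_span_singleton, zero_dvd_iff] using hs
  have hex : ∃ k, s ∉ Ideal.span {x ^ k} := ⟨N, hPN⟩
  have hk0N : Nat.find hex ≤ N := Nat.find_min' hex hPN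
  have hk0pos : 0 < Nat.find hex := by
    rcases Nat.eq_zero_or_pos (Nat.find hex) with h | h
    · exfalso
      have h0 := Nat.find_spec hex
      rw [h] at h0
      exact h0 (by simp [Ideal.mem_span_singleton])
    · exact h
  obtain ⟨k, hk⟩ : ∃ k, Nat.find hex = k + 1 :=
    ⟨Nat.find hex - 1, (Nat.succ_pred_eq_of_pos hk0pos).symm⟩
  have hkN : k < N := by omega
  have hmem : s ∈ Ideal.span {x ^ k} := by
    by_contra h
    exact Nat.find_min hex (by omega) h
  obtain ⟨t, rfl⟩ := Ideal.mem_span_singleton.mp hmem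
  have ht : t ∉ Ideal.span {x} := by
    intro h
    obtain ⟨r, rfl⟩ := Ideal.mem_span_singleton.mp h
    apply hk ▸ Nat.find_spec hex
    exact Ideal.mem_span_singleton.mpr ⟨r, by ring⟩
  exact ⟨k, hkN, t, hloc t ht, by ring⟩

private lemma chainAux_ideal {x : S} {N : ℕ} (hN : x ^ N = 0)
    (hloc : ∀ s : S, s ∉ Ideal.span {x} → IsUnit s)
    (I : Ideal S) : ∃ i ≤ N, I = Ideal.span {x ^ i} := by
  classical
  have hex : ∃ k, x ^ k ∈ I := ⟨N, hN ▸ I.zero_mem⟩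
  refine ⟨Nat.find hex, Nat.find_min' hex (hN ▸ I.zero_mem), le_antisymm ?_ ?_⟩
  · intro s hs
    by_cases h0 : s = 0
    · simp [h0]
    · obtain ⟨j, hj, u, hu, rfl⟩ := chainAux_struct hN hloc h0
      have hxj : x ^ j ∈ I := by
        have h2 : (↑hu.unit⁻¹ * (u * x ^ j)) ∈ I := I.mul_mem_left _ hs
        rwa [← mul_assoc, IsUnit.val_inv_mul, one_mul] at h2
      have hk_le : Nat.find hex ≤ j := Nat.find_min' hex hxj
      refine Ideal.mem_span_singleton.mpr (Dvd.dvd.mul_left ?_ u)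
      exact ⟨x ^ (j - Nat.find hex), by rw [← pow_add, Nat.add_sub_cancel' hk_le]⟩
  · rw [Ideal.span_le, Set.singleton_subset_iff]
    exact Nat.find_spec hex

end Abstract

private lemma chainAux_card_step {R S : Type*} [CommRing R] [CommRing S] [Algebra R S]
    (x : S) (γ : R) (i : ℕ)
    (hdec : ∀ t : S, ∃ a : R, ∃ t' : S, t = algebraMap R S a + x * t')
    (hker : ∀ a : R, algebraMap R S a * x ^ i ∈ Ideal.span {x ^ (i + 1)} ↔
      a ∈ Ideal.span {γ}) :
    Nat.card (Ideal.span {x ^ i} : Ideal S) =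
      Nat.card (R ⧸ Ideal.span {γ}) * Nat.card (Ideal.span {x ^ (i + 1)} : Ideal S) := by
  classical
  set Mi : Submodule R S := Submodule.restrictScalars R (Ideal.span {x ^ i}) with hMi
  set Mi1 : Submodule R S := Submodule.restrictScalars R (Ideal.span {x ^ (i + 1)}) with hMi1
  have hle : Mi1 ≤ Mi := by
    intro s hs
    obtain ⟨t, rfl⟩ := Ideal.mem_span_singleton.mp hs
    exact Ideal.mem_span_singleton.mpr ⟨x * t, by ring⟩
  set K : Submodule R Mi := Submodule.comap Mi.subtype Mi1 with hK
  have hxi : (x ^ i : S) ∈ Mi := Ideal.mem_span_singleton_self _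
  set φ : R →ₗ[R] Mi := LinearMap.toSpanSingleton R Mi ⟨x ^ i, hxi⟩ with hφ
  set ψ : R →ₗ[R] (Mi ⧸ K) := K.mkQ.comp φ with hψ
  have hφcoe : ∀ a : R, ((φ a : Mi) : S) = algebraMap R S a * x ^ i := by
    intro a
    show ((a • (⟨x ^ i, hxi⟩ : Mi) : Mi) : S) = _
    rw [Submodule.coe_smul]
    exact Algebra.smul_def a (x ^ i)
  have hψs : Function.Surjective ψ := by
    intro z
    obtain ⟨⟨s, hs⟩, rfl⟩ := K.mkQ_surjective z
    obtain ⟨t, ht⟩ := Ideal.mem_span_singleton.mp hs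
    obtain ⟨a, t', hat⟩ := hdec t
    refine ⟨a, ?_⟩
    rw [hψ, LinearMap.comp_apply, Submodule.mkQ_apply, Submodule.mkQ_apply,
      Submodule.Quotient.eq]
    have : ((φ a - ⟨s, hs⟩ : Mi) : S) = -(x ^ (i + 1) * t') := by
      rw [Submodule.coe_sub, hφcoe]
      simp only [ht, hat]
      ring
    show ((φ a - ⟨s, hs⟩ : Mi) : S) ∈ Mi1
    rw [this]
    exact neg_mem (Ideal.mem_span_singleton.mpr ⟨t', rfl⟩)
  have hker' : LinearMap.ker ψ = Ideal.span {γ} := by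
    ext a
    rw [LinearMap.mem_ker, hψ, LinearMap.comp_apply, Submodule.mkQ_apply,
      Submodule.Quotient.mk_eq_zero]
    show ((φ a : Mi) : S) ∈ Mi1 ↔ _
    rw [hφcoe]
    exact hker a
  have e1 : (R ⧸ Ideal.span {γ}) ≃ₗ[R] (Mi ⧸ K) :=
    (Submodule.quotEquivOfEq _ _ hker'.symm).trans (ψ.quotKerEquivOfSurjective hψs)
  have e2 : K ≃ₗ[R] Mi1 := Submodule.comapSubtypeEquivOfLe hle
  have lag : Nat.card Mi = Nat.card K * Nat.card (Mi ⧸ K) :=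
    Submodule.card_eq_card_quotient_mul_card K
  calc Nat.card (Ideal.span {x ^ i} : Ideal S) = Nat.card Mi := rfl
    _ = Nat.card K * Nat.card (Mi ⧸ K) := lag
    _ = Nat.card Mi1 * Nat.card (R ⧸ Ideal.span {γ}) := by
        rw [Nat.card_congr e2.toEquiv, Nat.card_congr e1.toEquiv]
    _ = Nat.card (R ⧸ Ideal.span {γ}) * Nat.card (Ideal.span {x ^ (i + 1)} : Ideal S) :=
        mul_comm _ _

set_option maxHeartbeats 1000000 in
set_option synthInstance.maxHeartbeats 400000 in
/-- If `e > 1`, `n > 1` and `λ ∈ γR \ γ²R`, then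
`S = R[x]/⟨x^n − λ⟩` is a finite chain ring with maximal ideal `⟨x⟩`, the
nilpotency index of `x` in `S` is `ne`, the ideals of `S` are exactly the
`⟨x^i⟩` for `0 ≤ i ≤ ne`, and `|⟨x^i⟩| = q^{ne − i}`. -/
theorem stmt_8 {R : Type} [CommRing R] [Fintype R] [IsLocalRing R]
    (γ : R) (e : ℕ)
    (hchain : ∀ I J : Ideal R, I ≤ J ∨ J ≤ I)
    (hmax : IsLocalRing.maximalIdeal R = Ideal.span {γ})
    (he : 1 < e) (hγe : γ ^ e = 0)
    (hγlt : ∀ k, 0 < k → k < e → γ ^ k ≠ 0)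
    (lam : R) (hlam1 : lam ∈ Ideal.span {γ}) (hlam2 : lam ∉ Ideal.span {γ ^ 2})
    (n : ℕ) (hn : 1 < n)
    (J : Ideal (Polynomial R))
    (hJ : J = Ideal.span {Polynomial.X ^ n - Polynomial.C lam}) :
    (∀ I₁ I₂ : Ideal (Polynomial R ⧸ J), I₁ ≤ I₂ ∨ I₂ ≤ I₁) ∧
    (Ideal.span {Ideal.Quotient.mk J Polynomial.X}).IsMaximal ∧
    (∀ I : Ideal (Polynomial R ⧸ J), I ≠ ⊤ →
      I ≤ Ideal.span {Ideal.Quotient.mk J Polynomial.X}) ∧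
    (Ideal.Quotient.mk J Polynomial.X) ^ (n * e) = 0 ∧
    (∀ k < n * e, (Ideal.Quotient.mk J Polynomial.X) ^ k ≠ 0) ∧
    (∀ I : Ideal (Polynomial R ⧸ J),
      ∃ i ≤ n * e, I = Ideal.span {(Ideal.Quotient.mk J Polynomial.X) ^ i}) ∧
    (∀ i ≤ n * e,
      Nat.card
        (Ideal.span {(Ideal.Quotient.mk J Polynomial.X) ^ i} :
          Ideal (Polynomial R ⧸ J)) =
        Nat.card (R ⧸ Ideal.span {γ}) ^ (n * e - i)) := by
  subst hJ
  set J : Ideal (Polynomial R) := Ideal.span {X ^ n - C lam} with hJ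
  set x : Polynomial R ⧸ J := Ideal.Quotient.mk J X with hx
  have hn0 : n ≠ 0 := by omega
  -- lam = γ * b with b a unit
  obtain ⟨b, hb⟩ := Ideal.mem_span_singleton.mp hlam1
  have hbu : IsUnit b := by
    by_contra h
    have hmem : b ∈ IsLocalRing.maximalIdeal R := (IsLocalRing.mem_maximalIdeal b).mpr h
    rw [hmax] at hmem
    obtain ⟨c, rfl⟩ := Ideal.mem_span_singleton.mp hmem
    exact hlam2 (Ideal.mem_span_singleton.mpr ⟨c, by rw [hb]; ring⟩)
  -- x^n = mk (C lam)
  have hxn : x ^ n = Ideal.Quotient.mk J (C lam) := by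
    have hf0 : Ideal.Quotient.mk J (X ^ n - C lam) = 0 := by
      rw [Ideal.Quotient.eq_zero_iff_mem]
      exact Ideal.subset_span rfl
    rw [map_sub, sub_eq_zero] at hf0
    rw [hx, ← map_pow, hf0]
  -- algebraMap description
  have halg : ∀ a : R, algebraMap R (Polynomial R ⧸ J) a = Ideal.Quotient.mk J (C a) := by
    intro a
    rw [← Ideal.Quotient.mk_algebraMap, Polynomial.algebraMap_eq]
  -- nonvanishing of low-degree polynomials
  have key0 : ∀ a : R, a ≠ 0 → ∀ r, r < n → Ideal.Quotient.mk J (C a * X ^ r) ≠ 0 := by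
    intro a ha r hr h
    rw [Ideal.Quotient.eq_zero_iff_mem, hJ, Ideal.mem_span_singleton] at h
    have hp0 : C a * X ^ r ≠ 0 := by
      intro h0
      apply ha
      have := congrArg (fun p => Polynomial.coeff p r) h0
      simpa [coeff_C_mul, coeff_X_pow] using this
    have hdlt : (C a * X ^ r).degree < (X ^ n - C lam).degree := by
      rw [degree_X_pow_sub_C (by omega) lam]
      refine lt_of_le_of_lt (degree_mul_le _ _) ?_
      refine lt_of_le_of_lt (add_le_add degree_C_le le_rfl) ?_
      rw [zero_add, degree_X_pow]
      exact_mod_cast hr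
    have hfm : (X ^ n - C lam).Monic := monic_X_pow_sub_C lam hn0
    exact hp0 (((Polynomial.modByMonic_eq_self_iff hfm).mpr hdlt).symm.trans
      ((Polynomial.modByMonic_eq_zero_iff_dvd hfm).mpr h))
  -- powers of x
  have hxk : ∀ k : ℕ, x ^ k =
      Ideal.Quotient.mk J (C (lam ^ (k / n)) * X ^ (k % n)) := by
    intro k
    conv_lhs => rw [← Nat.div_add_mod k n, pow_add, pow_mul, hxn]
    simp only [hx, map_mul, map_pow, C_pow]
  have H2 : ∀ k, k < n * e → x ^ k ≠ 0 := by
    intro k hk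
    have hr : k % n < n := Nat.mod_lt _ (by omega)
    have hm : k / n < e := by
      rw [Nat.div_lt_iff_lt_mul (by omega : 0 < n), Nat.mul_comm e n]
      exact hk
    have hlm : lam ^ (k / n) ≠ 0 := by
      rw [hb, mul_pow]
      intro h0
      have hg : γ ^ (k / n) = 0 := ((hbu.pow (k / n)).mul_left_eq_zero).mp h0
      rcases Nat.eq_zero_or_pos (k / n) with h | h
      · rw [h, pow_zero] at hg; exact one_ne_zero hg
      · exact hγlt _ h hm hg
    rw [hxk k]
    exact key0 _ hlm _ hr
  have H1 : x ^ (n * e) = 0 := by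
    have hlame : lam ^ e = 0 := by rw [hb, mul_pow, hγe, zero_mul]
    rw [pow_mul, hxn, ← map_pow, ← C_pow, hlame, map_zero, map_zero]
  have hnontriv : Nontrivial (Polynomial R ⧸ J) := by
    refine ⟨1, 0, ?_⟩
    have := H2 0 (by positivity)
    simpa using this
  -- algebraMap γ ∈ span {x}
  have hγx : algebraMap R (Polynomial R ⧸ J) γ ∈ Ideal.span {x} := by
    have hγ : γ = lam * ↑hbu.unit⁻¹ := by
      rw [hb, mul_assoc, hbu.mul_val_inv, mul_one]
    have hγc : algebraMap R (Polynomial R ⧸ J) γ =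
        x ^ n * Ideal.Quotient.mk J (C (↑hbu.unit⁻¹ : R)) := by
      rw [halg, hxn, ← map_mul, ← C_mul, ← hγ]
    rw [Ideal.mem_span_singleton, hγc]
    refine ⟨x ^ (n - 1) * Ideal.Quotient.mk J (C (↑hbu.unit⁻¹ : R)), ?_⟩
    rw [← mul_assoc, ← pow_succ']
    congr 2
    omega
  -- locality: everything outside span {x} is a unit
  have hloc : ∀ s : Polynomial R ⧸ J, s ∉ Ideal.span {x} → IsUnit s := by
    intro s hs
    obtain ⟨p, rfl⟩ := Ideal.Quotient.mk_surjective s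
    have hdecp : Ideal.Quotient.mk J p =
        Ideal.Quotient.mk J (C (p.coeff 0)) + x * Ideal.Quotient.mk J p.divX := by
      conv_lhs => rw [← X_mul_divX_add p]
      rw [map_add, map_mul, add_comm]
    by_cases hc : p.coeff 0 ∈ Ideal.span {γ}
    · exfalso
      apply hs
      obtain ⟨c, hc'⟩ := Ideal.mem_span_singleton.mp hc
      rw [hdecp]
      apply Ideal.add_mem
      · rw [hc', C_mul, map_mul, ← halg γ, ← halg c]
        exact Ideal.mul_mem_right _ _ hγx
      · exact Ideal.mul_mem_right _ _ (Ideal.mem_span_singleton_self x)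
    · have hcu : IsUnit (p.coeff 0) := by
        rw [← hmax] at hc
        by_contra h
        exact hc ((IsLocalRing.mem_maximalIdeal _).mpr h)
      rw [hdecp]
      exact chainAux_unit H1 ((hcu.map C).map (Ideal.Quotient.mk J))
  -- decomposition of arbitrary elements
  have hdec : ∀ t : Polynomial R ⧸ J,
      ∃ a : R, ∃ t' : Polynomial R ⧸ J, t = algebraMap R _ a + x * t' := by
    intro t
    obtain ⟨p, rfl⟩ := Ideal.Quotient.mk_surjective t
    refine ⟨p.coeff 0, Ideal.Quotient.mk J p.divX, ?_⟩
    rw [halg]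
    conv_lhs => rw [← X_mul_divX_add p]
    rw [map_add, map_mul, add_comm]
  -- kernel computation
  have hker : ∀ i, i < n * e → ∀ a : R,
      (algebraMap R (Polynomial R ⧸ J) a * x ^ i ∈ Ideal.span {x ^ (i + 1)} ↔
        a ∈ Ideal.span {γ}) := by
    intro i hi a
    constructor
    · intro h
      by_contra hnc
      have hau : IsUnit a := by
        rw [← hmax] at hnc
        by_contra h'
        exact hnc ((IsLocalRing.mem_maximalIdeal _).mpr h')
      have hxi : x ^ i ∈ Ideal.span {x ^ (i + 1)} := by
        have h2 := Ideal.mul_mem_left _ (algebraMap R (Polynomial R ⧸ J) ↑hau.unit⁻¹) h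
        rwa [← mul_assoc, ← map_mul, IsUnit.val_inv_mul, map_one, one_mul] at h2
      obtain ⟨t, ht⟩ := Ideal.mem_span_singleton.mp hxi
      have hu : IsUnit (1 - x * t) := by
        rw [show (1 : Polynomial R ⧸ J) - x * t = 1 + x * (-t) by ring]
        exact chainAux_unit H1 isUnit_one
      have hz : x ^ i * (1 - x * t) = 0 := by
        have : x ^ i * (1 - x * t) = x ^ i - x ^ (i + 1) * t := by ring
        rw [this, ← ht, sub_self]
      exact H2 i hi ((hu.mul_left_eq_zero).mp hz)
    · intro h
      obtain ⟨c, hc⟩ := Ideal.mem_span_singleton.mp h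
      obtain ⟨d, hd⟩ := Ideal.mem_span_singleton.mp hγx
      rw [Ideal.mem_span_singleton, hc]
      exact ⟨d * algebraMap R _ c, by rw [map_mul, hd]; ring⟩
  -- cardinality ladder
  have hq : ∀ j : ℕ, ∀ i : ℕ, i + j = n * e →
      Nat.card (Ideal.span {x ^ i} : Ideal (Polynomial R ⧸ J)) =
        Nat.card (R ⧸ Ideal.span {γ}) ^ j := by
    intro j
    induction j with
    | zero =>
      intro i hi
      have hie : i = n * e := by omega
      have hbot : (Ideal.span {x ^ i} : Ideal (Polynomial R ⧸ J)) = ⊥ := by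
        rw [hie, H1, Ideal.span_singleton_eq_bot]
      rw [hbot, pow_zero]
      exact Nat.card_unique
    | succ j ih =>
      intro i hi
      have hi' : i < n * e := by omega
      rw [chainAux_card_step x γ i hdec (hker i hi'), ih (i + 1) (by omega), pow_succ]
      ring
  refine ⟨?_, ?_, ?_, H1, H2, ?_, ?_⟩
  · -- chain condition
    intro I₁ I₂
    obtain ⟨i, _, rfl⟩ := chainAux_ideal H1 hloc I₁
    obtain ⟨j, _, rfl⟩ := chainAux_ideal H1 hloc I₂
    rcases le_total i j with hij | hij
    · right
      exact Ideal.span_singleton_le_span_singleton.mpr (pow_dvd_pow x hij)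
    · left
      exact Ideal.span_singleton_le_span_singleton.mpr (pow_dvd_pow x hij)
  · -- maximality
    rw [Ideal.isMaximal_iff]
    constructor
    · intro h1
      obtain ⟨t, ht⟩ := Ideal.mem_span_singleton.mp h1
      have h0 : (1 : Polynomial R ⧸ J) = 0 := by
        calc (1 : Polynomial R ⧸ J) = (x * t) ^ (n * e) := by rw [← ht, one_pow]
          _ = x ^ (n * e) * t ^ (n * e) := mul_pow _ _ _
          _ = 0 := by rw [H1, zero_mul]
      exact one_ne_zero h0
    · intro I s _ hsx hsI
      obtain ⟨c, hc⟩ := (hloc s hsx).exists_right_inv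
      exact hc ▸ I.mul_mem_right c hsI
  · -- every proper ideal is below span {x}
    intro I hI
    obtain ⟨i, _, rfl⟩ := chainAux_ideal H1 hloc I
    rcases Nat.eq_zero_or_pos i with h0 | h0
    · exfalso
      apply hI
      rw [h0, pow_zero, Ideal.span_singleton_one]
    · exact Ideal.span_singleton_le_span_singleton.mpr
        (dvd_pow_self x (by omega : i ≠ 0))
  · -- ideal classification
    exact chainAux_ideal H1 hloc
  · -- cardinality
    intro i hi
    exact hq (n * e - i) i (by omega)
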